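/- arXiv:1608.01619 — 8 statements merged into one kernel-verified Lean document; each statement's English description precedes it below -/
import Mathlib

section
/- Let A be a real m×n matrix, b ∈ ℝ^m, and x ∈ ℝ^n. Set r = Ax − b, Ē = −(1/(1+xᵀx)) r xᵀ and f̄ = (1/(1+xᵀx)) r. Then (A + Ē)x = b + f̄, the m×(n+1) matrix (Ē | f̄) has rank at most one, and its Frobenius norm satisfies ‖(Ē | f̄)‖_F = √(‖Ē‖_F² + ‖f̄‖₂²) = η(x). -/
open Matrix BigOperators

/-- Euclidean norm of a vector in ℝ^k. -/
noncomputable def vnorm {k : ℕ} (v : Fin k → ℝ) : ℝ := Real.sqrt (∑ i, (v i) ^ 2)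

/-- Frobenius norm of a real matrix. -/
noncomputable def frob {m n : ℕ} (E : Matrix (Fin m) (Fin n) ℝ) : ℝ :=
  Real.sqrt (∑ i, ∑ j, (E i j) ^ 2)

/-- η(x) = ‖Ax − b‖₂ / √(1 + xᵀx). -/
noncomputable def eta {m n : ℕ} (A : Matrix (Fin m) (Fin n) ℝ) (b : Fin m → ℝ)
    (x : Fin n → ℝ) : ℝ := vnorm (A.mulVec x - b) / Real.sqrt (1 + x ⬝ᵥ x)

theorem stmt_0 {m n : ℕ} (A : Matrix (Fin m) (Fin n) ℝ) (b : Fin m → ℝ) (x : Fin n → ℝ)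
    (r : Fin m → ℝ) (hr : r = A.mulVec x - b)
    (Ebar : Matrix (Fin m) (Fin n) ℝ)
    (hE : Ebar = Matrix.of fun i j => -(1 / (1 + x ⬝ᵥ x)) * (r i * x j))
    (fbar : Fin m → ℝ) (hf : fbar = fun i => (1 / (1 + x ⬝ᵥ x)) * r i) :
    (A + Ebar).mulVec x = b + fbar ∧
    (Matrix.of fun i => Fin.snoc (Ebar i) (fbar i)).rank ≤ 1 ∧
    frob (Matrix.of fun i => Fin.snoc (Ebar i) (fbar i)) =
      Real.sqrt (frob Ebar ^ 2 + vnorm fbar ^ 2) ∧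
    Real.sqrt (frob Ebar ^ 2 + vnorm fbar ^ 2) = eta A b x := by
  have hxx : (0:ℝ) ≤ x ⬝ᵥ x := by
    simp only [dotProduct]
    exact Finset.sum_nonneg fun i _ => mul_self_nonneg _
  have hs : (0:ℝ) < 1 + x ⬝ᵥ x := by linarith
  have hsne : (1 + x ⬝ᵥ x) ≠ 0 := ne_of_gt hs
  refine ⟨?_, ?_, ?_, ?_⟩
  · funext i
    have hEv : Ebar.mulVec x i = -(1 / (1 + x ⬝ᵥ x)) * r i * (x ⬝ᵥ x) := by
      simp only [hE, Matrix.mulVec, dotProduct, Matrix.of_apply]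
      rw [Finset.mul_sum]
      congr 1; funext j; ring
    have hri : r i = A.mulVec x i - b i := by rw [hr]; rfl
    simp only [Matrix.add_mulVec, Pi.add_apply, hEv, hf]
    rw [hri]
    field_simp
    ring
  · have hM : (Matrix.of fun i => Fin.snoc (Ebar i) (fbar i)) =
        Matrix.vecMulVec (fun i => (1 / (1 + x ⬝ᵥ x)) * r i)
          (Fin.snoc (fun j => -x j) 1) := by
      ext i j
      simp only [Matrix.of_apply, Matrix.vecMulVec_apply]
      refine Fin.lastCases ?_ ?_ j
      · simp [hf]
      · intro j
        simp [hE, Fin.snoc_castSucc]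
        ring
    rw [hM, Matrix.vecMulVec_eq (Fin 1)]
    have h1 := Matrix.rank_mul_le_left
      (Matrix.replicateCol (Fin 1) fun i => (1 / (1 + x ⬝ᵥ x)) * r i)
      (Matrix.replicateRow (Fin 1) (Fin.snoc (fun j => -x j) 1))
    have h2 := Matrix.rank_le_card_width
      (Matrix.replicateCol (Fin 1) fun i => (1 / (1 + x ⬝ᵥ x)) * r i)
    exact le_trans (h1.trans h2) (by simp)
  · have hnn1 : (0:ℝ) ≤ ∑ i, ∑ j, (Ebar i j)^2 := by positivity
    have hnn2 : (0:ℝ) ≤ ∑ i, (fbar i)^2 := by positivity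
    unfold frob vnorm
    rw [Real.sq_sqrt hnn1, Real.sq_sqrt hnn2]
    congr 1
    rw [← Finset.sum_add_distrib]
    refine Finset.sum_congr rfl fun i _ => ?_
    rw [Fin.sum_univ_castSucc]
    simp
  · have hnn1 : (0:ℝ) ≤ ∑ i, ∑ j, (Ebar i j)^2 := by positivity
    have hnn2 : (0:ℝ) ≤ ∑ i, (fbar i)^2 := by positivity
    have key : frob Ebar ^ 2 + vnorm fbar ^ 2 = (∑ i, (r i)^2) / (1 + x ⬝ᵥ x) := by
      unfold frob vnorm
      rw [Real.sq_sqrt hnn1, Real.sq_sqrt hnn2]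
      have h1 : ∀ i : Fin m, ∑ j, (Ebar i j)^2
          = (1 / (1 + x ⬝ᵥ x))^2 * (x ⬝ᵥ x) * (r i)^2 := by
        intro i
        simp only [hE, Matrix.of_apply, dotProduct]
        rw [Finset.mul_sum, Finset.sum_mul]
        refine Finset.sum_congr rfl fun j _ => ?_
        ring
      have h2 : ∀ i : Fin m, (fbar i)^2 = (1 / (1 + x ⬝ᵥ x))^2 * (r i)^2 := by
        intro i; rw [hf]; ring
      simp only [h1, h2]
      rw [← Finset.sum_add_distrib, Finset.sum_div]
      refine Finset.sum_congr rfl fun i _ => ?_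
      field_simp
      ring
    rw [key, Real.sqrt_div (by positivity)]
    unfold eta vnorm
    rw [hr]
end

section
/- Let A be a real m×n matrix, b ∈ ℝ^m, and x ∈ ℝ^n. For every matrix E ∈ ℝ^{m×n} and vector f ∈ ℝ^m such that (A + E)x = b + f, one has √(‖E‖_F² + ‖f‖₂²) ≥ η(x). -/
open Matrix BigOperators

lemma cs_aux (c s P Q : ℝ) (hP : 0 ≤ P) (hQ : 0 ≤ Q) (hs : s ^ 2 ≤ P * Q) :
    (c + s) ^ 2 ≤ (c ^ 2 + P) * (1 + Q) := by
  rcases eq_or_lt_of_le hQ with h0 | h0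
  · have hs0 : s = 0 := by nlinarith [sq_nonneg s]
    subst hs0
    nlinarith
  · nlinarith [sq_nonneg (c * Q - s), mul_nonneg (sub_nonneg.2 hs) (by linarith : (0:ℝ) ≤ 1 + Q),
      mul_pos h0 h0]

lemma key_cs {n : ℕ} (c : ℝ) (u v : Fin n → ℝ) :
    (c + ∑ j, u j * v j) ^ 2 ≤ (c ^ 2 + ∑ j, u j ^ 2) * (1 + ∑ j, v j ^ 2) := by
  exact cs_aux c _ _ _ (Finset.sum_nonneg fun j _ => sq_nonneg _)
    (Finset.sum_nonneg fun j _ => sq_nonneg _)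
    (Finset.sum_mul_sq_le_sq_mul_sq Finset.univ u v)

theorem stmt_1 {m n : ℕ} (A : Matrix (Fin m) (Fin n) ℝ) (b : Fin m → ℝ) (x : Fin n → ℝ)
    (E : Matrix (Fin m) (Fin n) ℝ) (f : Fin m → ℝ)
    (h : (A + E).mulVec x = b + f) :
    Real.sqrt (frob E ^ 2 + vnorm f ^ 2) ≥ eta A b x := by
  have hQ : (0:ℝ) ≤ x ⬝ᵥ x := by
    simp only [dotProduct]
    exact Finset.sum_nonneg fun j _ => mul_self_nonneg _
  have hD : (0:ℝ) < 1 + x ⬝ᵥ x := by linarith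
  have hxb : A.mulVec x - b = f - E.mulVec x := by
    funext i
    have h' := congrFun h i
    simp only [add_mulVec, Pi.add_apply, Pi.sub_apply] at h' ⊢
    linarith
  have hS : (0:ℝ) ≤ (∑ i, ∑ j, (E i j) ^ 2) + ∑ i, (f i) ^ 2 := by positivity
  have hsq : frob E ^ 2 + vnorm f ^ 2 = (∑ i, ∑ j, (E i j) ^ 2) + ∑ i, (f i) ^ 2 := by
    rw [frob, vnorm, Real.sq_sqrt (by positivity), Real.sq_sqrt (by positivity)]
  have hkey : ∑ i, ((A.mulVec x - b) i) ^ 2 ≤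
      ((∑ i, ∑ j, (E i j) ^ 2) + ∑ i, (f i) ^ 2) * (1 + x ⬝ᵥ x) := by
    rw [hxb]
    have hx : x ⬝ᵥ x = ∑ j, (x j) ^ 2 := by
      simp [dotProduct, sq]
    calc ∑ i, ((f - E.mulVec x) i) ^ 2
        ≤ ∑ i, ((f i) ^ 2 + ∑ j, (E i j) ^ 2) * (1 + ∑ j, (x j) ^ 2) := by
          apply Finset.sum_le_sum
          intro i _
          have := key_cs (f i) (fun j => -E i j) x
          simp only [neg_mul, Finset.sum_neg_distrib, neg_sq] at this
          simpa [mulVec, dotProduct, sub_eq_add_neg, Pi.sub_apply] using this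
      _ = ((∑ i, ∑ j, (E i j) ^ 2) + ∑ i, (f i) ^ 2) * (1 + x ⬝ᵥ x) := by
          rw [hx, ← Finset.sum_mul, Finset.sum_add_distrib]
          ring
  rw [ge_iff_le, eta, div_le_iff₀ (Real.sqrt_pos.mpr hD), ← Real.sqrt_mul (by positivity), hsq,
    vnorm]
  exact Real.sqrt_le_sqrt hkey
end

section
/- Let A be a real m×n matrix and b ∈ ℝ^m, and let C = (A | b). The range of the map f : ℝ^n → ℝ^m, f(x) = μ(x)(Ax − b), equals the set { C y : y ∈ ℝ^{n+1}, ‖y‖₂ = 1, y_{n+1} < 0 }. In particular, for each x ∈ ℝ^n one has f(x) = C y with y = μ(x)·(x, −1)ᵀ, which is a unit vector with negative last component, and conversely for every unit vector y ∈ ℝ^{n+1} with y_{n+1} < 0 the vector x = −(1/y_{n+1})(y₁,…,y_n)ᵀ satisfies f(x) = C y. -/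
open Matrix BigOperators

/-- μ(x) = (1 + xᵀx)^(−1/2). -/
noncomputable def mu {n : ℕ} (x : Fin n → ℝ) : ℝ := 1 / Real.sqrt (1 + x ⬝ᵥ x)

lemma one_add_dot_pos {n : ℕ} (x : Fin n → ℝ) : 0 < 1 + x ⬝ᵥ x := by
  have h : 0 ≤ x ⬝ᵥ x := by
    exact Finset.sum_nonneg fun i _ => mul_self_nonneg _
  linarith

lemma mu_pos {n : ℕ} (x : Fin n → ℝ) : 0 < mu x := by
  unfold mu
  exact div_pos one_pos (Real.sqrt_pos.mpr (one_add_dot_pos x))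

lemma mu_sq {n : ℕ} (x : Fin n → ℝ) : (mu x) ^ 2 = 1 / (1 + x ⬝ᵥ x) := by
  unfold mu
  rw [div_pow, one_pow, Real.sq_sqrt (one_add_dot_pos x).le]

theorem stmt_2 {m n : ℕ} (A : Matrix (Fin m) (Fin n) ℝ) (b : Fin m → ℝ)
    (C : Matrix (Fin m) (Fin (n + 1)) ℝ)
    (hC : C = Matrix.of fun i => Fin.snoc (A i) (b i))
    (f : (Fin n → ℝ) → (Fin m → ℝ))
    (hf : ∀ x, f x = mu x • (A.mulVec x - b)) :
    Set.range f =
      {z : Fin m → ℝ | ∃ y : Fin (n + 1) → ℝ,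
        vnorm y = 1 ∧ y (Fin.last n) < 0 ∧ z = C.mulVec y} ∧
    (∀ x : Fin n → ℝ,
      vnorm (mu x • (Fin.snoc x (-1) : Fin (n + 1) → ℝ)) = 1 ∧
      (mu x • (Fin.snoc x (-1) : Fin (n + 1) → ℝ)) (Fin.last n) < 0 ∧
      f x = C.mulVec (mu x • (Fin.snoc x (-1) : Fin (n + 1) → ℝ))) ∧
    (∀ y : Fin (n + 1) → ℝ, vnorm y = 1 → y (Fin.last n) < 0 →
      f (fun i => -(1 / y (Fin.last n)) * y i.castSucc) = C.mulVec y) := by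
  -- forward direction
  have hdot : ∀ x : Fin n → ℝ, x ⬝ᵥ x = ∑ i, (x i) ^ 2 := by
    intro x; simp [dotProduct, sq]
  have part2 : ∀ x : Fin n → ℝ,
      vnorm (mu x • (Fin.snoc x (-1) : Fin (n + 1) → ℝ)) = 1 ∧
      (mu x • (Fin.snoc x (-1) : Fin (n + 1) → ℝ)) (Fin.last n) < 0 ∧
      f x = C.mulVec (mu x • (Fin.snoc x (-1) : Fin (n + 1) → ℝ)) := by
    intro x
    have hsum : ∑ j : Fin (n + 1), ((mu x • (Fin.snoc x (-1) : Fin (n + 1) → ℝ)) j) ^ 2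
        = (mu x) ^ 2 * (1 + x ⬝ᵥ x) := by
      rw [Fin.sum_univ_castSucc]
      simp only [Pi.smul_apply, Fin.snoc_castSucc, Fin.snoc_last, smul_eq_mul]
      rw [hdot, mul_add, mul_one, Finset.mul_sum]
      have hterm : ∑ i : Fin n, (mu x * x i) ^ 2 = ∑ i : Fin n, mu x ^ 2 * x i ^ 2 :=
        Finset.sum_congr rfl fun i _ => by ring
      rw [hterm]
      ring
    refine ⟨?_, ?_, ?_⟩
    · unfold vnorm
      rw [hsum, mu_sq, one_div, inv_mul_cancel₀ (one_add_dot_pos x).ne', Real.sqrt_one]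
    · simp only [Pi.smul_apply, Fin.snoc_last, smul_eq_mul, mul_neg_one]
      linarith [mu_pos x]
    · rw [hf, mulVec_smul]
      congr 1
      funext i
      simp only [mulVec, dotProduct, hC, Matrix.of_apply, Pi.sub_apply]
      rw [Fin.sum_univ_castSucc]
      simp [mulVec, dotProduct]
      ring
  have part3 : ∀ y : Fin (n + 1) → ℝ, vnorm y = 1 → y (Fin.last n) < 0 →
      f (fun i => -(1 / y (Fin.last n)) * y i.castSucc) = C.mulVec y := by
    intro y hy hyl
    set c := y (Fin.last n) with hc
    set x : Fin n → ℝ := fun i => -(1 / c) * y i.castSucc with hx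
    have hsum1 : ∑ j, (y j) ^ 2 = 1 := by
      have h0 : 0 ≤ ∑ j, (y j) ^ 2 := by positivity
      have := hy
      unfold vnorm at this
      nlinarith [Real.sq_sqrt h0, this]
    have hfront : ∑ i : Fin n, (y i.castSucc) ^ 2 = 1 - c ^ 2 := by
      rw [Fin.sum_univ_castSucc] at hsum1
      linarith
    have hcne : c ≠ 0 := hyl.ne
    have hxx : 1 + x ⬝ᵥ x = 1 / c ^ 2 := by
      rw [hdot]
      have : ∑ i, (x i) ^ 2 = (1 / c ^ 2) * ∑ i : Fin n, (y i.castSucc) ^ 2 := by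
        rw [Finset.mul_sum]
        refine Finset.sum_congr rfl fun i _ => by
          simp only [hx]; ring
      rw [this, hfront]
      field_simp
      ring
    have hmu : mu x = -c := by
      unfold mu
      rw [hxx, show (1:ℝ)/c^2 = (c^2)⁻¹ from one_div _, Real.sqrt_inv,
        Real.sqrt_sq_eq_abs, abs_of_neg hyl]
      field_simp
    rw [hf]
    funext i
    simp only [Pi.smul_apply, Pi.sub_apply, smul_eq_mul, hmu, mulVec, dotProduct, hC,
      Matrix.of_apply]
    rw [Fin.sum_univ_castSucc]
    simp only [Fin.snoc_castSucc, Fin.snoc_last]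
    have hA : ∑ j, A i j * x j = -(1 / c) * ∑ j : Fin n, A i j * y j.castSucc := by
      rw [Finset.mul_sum]
      exact Finset.sum_congr rfl fun j _ => by rw [hx]; ring
    rw [hA]
    field_simp
    ring
  refine ⟨?_, part2, part3⟩
  ext z
  constructor
  · rintro ⟨x, rfl⟩
    obtain ⟨h1, h2, h3⟩ := part2 x
    exact ⟨_, h1, h2, h3⟩
  · rintro ⟨y, hy1, hy2, rfl⟩
    exact ⟨_, part3 y hy1 hy2⟩
end

section
/- Let A be a real m×n matrix and b ∈ ℝ^m. For all x, h ∈ ℝ^n it holds f(x + h) = τ (f(x) + θ J(x) h), where θ = 1/(1 + μ(x)² (xᵀh)) and τ = (μ(x+h)/μ(x)) (1 + μ(x)² (xᵀh)), provided 1 + μ(x)²(xᵀh) ≠ 0. -/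
open Matrix BigOperators

/-- f(x) = μ(x)(Ax − b). -/
noncomputable def fTLS {m n : ℕ} (A : Matrix (Fin m) (Fin n) ℝ) (b : Fin m → ℝ)
    (x : Fin n → ℝ) : Fin m → ℝ := mu x • (A.mulVec x - b)

/-- Jacobian J(x) = μ(x) A − μ(x)³ (Ax − b) xᵀ. -/
noncomputable def jac {m n : ℕ} (A : Matrix (Fin m) (Fin n) ℝ) (b : Fin m → ℝ)
    (x : Fin n → ℝ) : Matrix (Fin m) (Fin n) ℝ :=
  mu x • A - (mu x) ^ 3 • Matrix.vecMulVec (A.mulVec x - b) x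

theorem stmt_4 {m n : ℕ} (A : Matrix (Fin m) (Fin n) ℝ) (b : Fin m → ℝ)
    (x h : Fin n → ℝ)
    (hne : 1 + (mu x) ^ 2 * (x ⬝ᵥ h) ≠ 0)
    (θ τ : ℝ)
    (hθ : θ = 1 / (1 + (mu x) ^ 2 * (x ⬝ᵥ h)))
    (hτ : τ = (mu (x + h) / mu x) * (1 + (mu x) ^ 2 * (x ⬝ᵥ h))) :
    fTLS A b (x + h) = τ • (fTLS A b x + θ • (jac A b x).mulVec h) := by
  have hpos : 0 < 1 + x ⬝ᵥ x := by
    have : 0 ≤ x ⬝ᵥ x := Finset.sum_nonneg fun j _ => mul_self_nonneg (x j)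
    linarith
  have hmu : mu x ≠ 0 := by
    unfold mu
    have := Real.sqrt_pos.mpr hpos
    positivity
  subst hθ hτ
  funext i
  have hvm : (Matrix.vecMulVec (A.mulVec x - b) x).mulVec h i
      = (A.mulVec x - b) i * (x ⬝ᵥ h) := by
    simp [Matrix.mulVec, Matrix.vecMulVec_apply, dotProduct, Finset.mul_sum, mul_assoc]
  simp only [fTLS, jac, Pi.smul_apply, Pi.add_apply, smul_eq_mul,
    Matrix.mulVec_add, Matrix.sub_mulVec, Matrix.smul_mulVec, Pi.sub_apply, hvm]
  field_simp
  ring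
end

section
/- Let A be a real m×n matrix and b ∈ ℝ^m. Let x, h ∈ ℝ^n be such that 1 − μ(x)² (xᵀh) ≠ 0, and set α = 1/(1 − μ(x)² (xᵀh)). Then f(x + α h) = τ̂ (f(x) + J(x) h), where τ̂ = α · μ(x + αh)/μ(x). -/
open Matrix BigOperators

lemma mu_ne_zero {n : ℕ} (x : Fin n → ℝ) : mu x ≠ 0 := by
  have h1 : 0 ≤ x ⬝ᵥ x := by
    simpa [dotProduct] using Finset.sum_nonneg fun i _ => mul_self_nonneg (x i)
  have h2 : 0 < Real.sqrt (1 + x ⬝ᵥ x) := Real.sqrt_pos.mpr (by linarith)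
  unfold mu
  positivity

theorem stmt_6 {m n : ℕ} (A : Matrix (Fin m) (Fin n) ℝ) (b : Fin m → ℝ)
    (x h : Fin n → ℝ)
    (hne : 1 - (mu x) ^ 2 * (x ⬝ᵥ h) ≠ 0)
    (α : ℝ) (hα : α = 1 / (1 - (mu x) ^ 2 * (x ⬝ᵥ h)))
    (τhat : ℝ) (hτ : τhat = α * (mu (x + α • h) / mu x)) :
    fTLS A b (x + α • h) = τhat • (fTLS A b x + (jac A b x).mulVec h) := by
  have hmu := mu_ne_zero x
  have hvv : (Matrix.vecMulVec (A.mulVec x - b) x).mulVec h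
      = (x ⬝ᵥ h) • (A.mulVec x - b) := by
    funext i
    simp [Matrix.mulVec, Matrix.vecMulVec_apply, dotProduct, Finset.mul_sum,
      mul_assoc, mul_comm, mul_left_comm]
  have hjac : (jac A b x).mulVec h
      = mu x • A.mulVec h - ((mu x) ^ 3 * (x ⬝ᵥ h)) • (A.mulVec x - b) := by
    rw [jac, Matrix.sub_mulVec, Matrix.smul_mulVec, Matrix.smul_mulVec,
      hvv, smul_smul]
  have hα' : α * (1 - (mu x) ^ 2 * (x ⬝ᵥ h)) = 1 := by
    field_simp at hα; linarith [hα]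
  funext i
  have hmv : A.mulVec (x + α • h) = A.mulVec x + α • A.mulVec h := by
    rw [Matrix.mulVec_add, Matrix.mulVec_smul]
  simp only [fTLS, hjac, hmv, hτ, Pi.smul_apply, Pi.add_apply, Pi.sub_apply,
    smul_eq_mul]
  field_simp
  linear_combination (-1 * mu (x + α • h) * ((A.mulVec x) i - b i)) * hα'
end

section
/- Let A be a real m×n matrix and b ∈ ℝ^m. Let x, h ∈ ℝ^n satisfy the normal equations J(x)ᵀ(J(x)h + f(x)) = 0 and 1 − μ(x)² (xᵀh) ≠ 0, and set α = 1/(1 − μ(x)² (xᵀh)). Then f(x + α h) is orthogonal to J(x)h, i.e. (J(x)h)ᵀ f(x + α h) = 0. -/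
open Matrix BigOperators

theorem stmt_7 {m n : ℕ} (A : Matrix (Fin m) (Fin n) ℝ) (b : Fin m → ℝ)
    (x h : Fin n → ℝ)
    (hnormal : (jac A b x)ᵀ.mulVec ((jac A b x).mulVec h + fTLS A b x) = 0)
    (hne : 1 - (mu x) ^ 2 * (x ⬝ᵥ h) ≠ 0)
    (α : ℝ) (hα : α = 1 / (1 - (mu x) ^ 2 * (x ⬝ᵥ h))) :
    (jac A b x).mulVec h ⬝ᵥ fTLS A b (x + α • h) = 0 := by
  have hμ : mu x ≠ 0 := by
    have h1 : (0:ℝ) ≤ x ⬝ᵥ x := by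
      unfold dotProduct; exact Finset.sum_nonneg fun i _ => mul_self_nonneg _
    have h2 : (0:ℝ) < 1 + x ⬝ᵥ x := by linarith
    simp [mu, Real.sqrt_eq_zero', not_le, h2, ne_of_gt]
  have hαne : α ≠ 0 := by rw [hα]; exact one_div_ne_zero hne
  set μ := mu x with hμdef
  set r := A.mulVec x - b with hr
  have hJh : (jac A b x).mulVec h = μ • A.mulVec h - (μ^3 * (x ⬝ᵥ h)) • r := by
    rw [jac, Matrix.sub_mulVec, Matrix.smul_mulVec, Matrix.smul_mulVec]
    congr 1
    funext i
    simp only [Matrix.smul_apply, Matrix.mulVec, Matrix.vecMulVec_apply, dotProduct,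
      Pi.smul_apply, Pi.sub_apply, smul_eq_mul, Finset.mul_sum]
    rw [hr]
    simp only [Pi.sub_apply, Matrix.mulVec, dotProduct]
    rw [Finset.sum_mul]
    exact Finset.sum_congr rfl fun j _ => by ring
  have key : (jac A b x).mulVec h ⬝ᵥ ((jac A b x).mulVec h + fTLS A b x) = 0 := by
    have := congrArg (fun v => h ⬝ᵥ v) hnormal
    simpa [Matrix.dotProduct_mulVec, Matrix.vecMul_transpose] using this
  -- Jh + f = μ • Ah + (μ/α) • r
  have hsum : (jac A b x).mulVec h + fTLS A b x
      = μ • A.mulVec h + (μ * (1 - μ^2 * (x ⬝ᵥ h))) • r := by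
    rw [hJh, fTLS]
    rw [← hr, ← hμdef]
    funext i
    simp [mul_sub]
    ring
  have hf2 : fTLS A b (x + α • h) = mu (x + α • h) • (r + α • A.mulVec h) := by
    rw [fTLS]
    congr 1
    rw [Matrix.mulVec_add, Matrix.mulVec_smul, hr]
    funext i; simp; ring
  rw [hf2]
  set c := (jac A b x).mulVec h ⬝ᵥ A.mulVec h with hc
  set d := (jac A b x).mulVec h ⬝ᵥ r with hd
  have key2 : μ * c + (μ * (1 - μ^2 * (x ⬝ᵥ h))) * d = 0 := by
    rw [hsum] at key
    simpa [dotProduct_add, dotProduct_smul, hc, hd, smul_eq_mul] using key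
  have hrel : d + α * c = 0 := by
    have hβ : (1 - μ^2 * (x ⬝ᵥ h)) = 1 / α := by
      rw [hα]; field_simp
    rw [hβ] at key2
    field_simp at key2
    have h0 : μ * (d + α * c) = 0 := by linear_combination key2
    rcases mul_eq_zero.mp h0 with h1 | h1
    · exact absurd h1 hμ
    · exact h1
  calc (jac A b x).mulVec h ⬝ᵥ mu (x + α • h) • (r + α • A.mulVec h)
      = mu (x + α • h) * (d + α * c) := by
        simp [dotProduct_smul, dotProduct_add, hc, hd, smul_eq_mul]; ring
    _ = 0 := by rw [hrel, mul_zero]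
end

section
/- Let A be a real m×n matrix and b ∈ ℝ^m, and let C = (A | b). Suppose λ is the smallest eigenvalue of the symmetric matrix CᵀC, that λ is a simple eigenvalue (its eigenspace is one-dimensional), and that v = (v̂ᵀ, γ)ᵀ ∈ ℝ^{n+1} is a unit eigenvector of CᵀC for λ with γ ≠ 0. Then x* = −(1/γ) v̂ satisfies η(x*)² = λ, and for every x ∈ ℝ^n with x ≠ x* one has η(x)² > λ; i.e., x* is the unique global minimizer of η. -/
open Matrix BigOperators

lemma aux_rayleigh {k : ℕ} (M : Matrix (Fin k) (Fin k) ℝ) (hM : M.IsHermitian) (lam : ℝ)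
    (hmin : ∀ μ : ℝ, Module.End.HasEigenvalue (Matrix.toLin' M) μ → lam ≤ μ)
    (z : Fin k → ℝ) :
    lam * (z ⬝ᵥ z) ≤ z ⬝ᵥ (M *ᵥ z) ∧
      (z ⬝ᵥ (M *ᵥ z) = lam * (z ⬝ᵥ z) → M *ᵥ z = lam • z) := by
  classical
  set U : Matrix (Fin k) (Fin k) ℝ := (hM.eigenvectorUnitary : Matrix (Fin k) (Fin k) ℝ) with hU
  have hUU' : U * star U = 1 := Unitary.coe_mul_star_self hM.eigenvectorUnitary
  have hspec : M = U * Matrix.diagonal hM.eigenvalues * star U := by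
    convert hM.spectral_theorem using 3
    rw [Unitary.conjStarAlgAut_apply]
    congr 2
  set w : Fin k → ℝ := star U *ᵥ z with hw
  have hstarU : star U = Uᵀ := by
    rw [Matrix.star_eq_conjTranspose, Matrix.conjTranspose_eq_transpose_of_trivial]
  have hz : U *ᵥ w = z := by
    rw [hw, Matrix.mulVec_mulVec, hUU', Matrix.one_mulVec]
  have key : ∀ y : Fin k → ℝ, z ⬝ᵥ (U *ᵥ y) = w ⬝ᵥ y := by
    intro y
    rw [Matrix.dotProduct_mulVec]
    congr 1
    rw [hw, hstarU]
    exact (Matrix.mulVec_transpose U z).symm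
  have hMz : U *ᵥ (Matrix.diagonal hM.eigenvalues *ᵥ w) = M *ᵥ z := by
    rw [hw, Matrix.mulVec_mulVec, Matrix.mulVec_mulVec, ← hspec]
  have hquad : z ⬝ᵥ (M *ᵥ z) = ∑ i, hM.eigenvalues i * w i ^ 2 := by
    rw [← hMz, key]
    simp only [dotProduct, Matrix.mulVec_diagonal]
    exact Finset.sum_congr rfl fun i _ => by ring
  have hnorm : z ⬝ᵥ z = ∑ i, w i ^ 2 := by
    have : z ⬝ᵥ z = z ⬝ᵥ (U *ᵥ w) := by rw [hz]
    rw [this, key]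
    simp only [dotProduct]
    exact Finset.sum_congr rfl fun i _ => by ring
  have heig : ∀ i, lam ≤ hM.eigenvalues i := by
    intro i
    apply hmin
    apply Module.End.hasEigenvalue_of_hasEigenvector (x := ⇑(hM.eigenvectorBasis i))
    constructor
    · rw [Module.End.mem_eigenspace_iff, Matrix.toLin'_apply]
      exact hM.mulVec_eigenvectorBasis i
    · intro h0
      have h1 : hM.eigenvectorBasis i = 0 := by
        ext j
        exact congrFun h0 j
      have := hM.eigenvectorBasis.orthonormal.1 i
      rw [h1] at this
      simp at this
  have hdiff : z ⬝ᵥ (M *ᵥ z) - lam * (z ⬝ᵥ z) = ∑ i, (hM.eigenvalues i - lam) * w i ^ 2 := by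
    rw [hquad, hnorm, Finset.mul_sum, ← Finset.sum_sub_distrib]
    exact Finset.sum_congr rfl fun i _ => by ring
  have hterm : ∀ i ∈ Finset.univ, 0 ≤ (hM.eigenvalues i - lam) * w i ^ 2 := by
    intro i _
    exact mul_nonneg (by linarith [heig i]) (sq_nonneg _)
  constructor
  · nlinarith [Finset.sum_nonneg hterm, hdiff]
  · intro heq
    have hzero : ∑ i, (hM.eigenvalues i - lam) * w i ^ 2 = 0 := by linarith [hdiff]
    have hall := (Finset.sum_eq_zero_iff_of_nonneg hterm).mp hzero
    have hDw : Matrix.diagonal hM.eigenvalues *ᵥ w = lam • w := by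
      ext i
      rw [Matrix.mulVec_diagonal]
      have := hall i (Finset.mem_univ i)
      rcases mul_eq_zero.mp this with h | h
      · have : hM.eigenvalues i = lam := by linarith
        simp [this]
      · have : w i = 0 := by
          have := sq_eq_zero_iff.mp h
          exact this
        simp [this]
    rw [← hMz, hDw, Matrix.mulVec_smul, hz]

lemma aux_dot_nonneg {k : ℕ} (x : Fin k → ℝ) : 0 ≤ x ⬝ᵥ x :=
  Finset.sum_nonneg fun i _ => mul_self_nonneg _

lemma aux_eta_sq {m n : ℕ} (A : Matrix (Fin m) (Fin n) ℝ) (b : Fin m → ℝ) (x : Fin n → ℝ) :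
    eta A b x ^ 2 = ((A.mulVec x - b) ⬝ᵥ (A.mulVec x - b)) / (1 + x ⬝ᵥ x) := by
  have h1 : (0:ℝ) < 1 + x ⬝ᵥ x := by linarith [aux_dot_nonneg x]
  unfold eta vnorm
  rw [div_pow, Real.sq_sqrt h1.le, Real.sq_sqrt (Finset.sum_nonneg fun i _ => sq_nonneg _)]
  congr 1
  simp only [dotProduct]
  exact Finset.sum_congr rfl fun i _ => sq ((A.mulVec x - b) i)

theorem stmt_10 {m n : ℕ} (A : Matrix (Fin m) (Fin n) ℝ) (b : Fin m → ℝ)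
    (C : Matrix (Fin m) (Fin (n + 1)) ℝ)
    (hC : C = Matrix.of fun i => Fin.snoc (A i) (b i))
    (lam : ℝ) (v : Fin (n + 1) → ℝ)
    (hv : (Cᵀ * C).mulVec v = lam • v) (hvnorm : vnorm v = 1)
    (hmin : ∀ μ : ℝ, Module.End.HasEigenvalue (Matrix.toLin' (Cᵀ * C)) μ → lam ≤ μ)
    (hsimple : Module.finrank ℝ (Module.End.eigenspace (Matrix.toLin' (Cᵀ * C)) lam) = 1)
    (hγ : v (Fin.last n) ≠ 0)
    (xstar : Fin n → ℝ)
    (hxstar : xstar = fun i => -(1 / v (Fin.last n)) * v i.castSucc) :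
    eta A b xstar ^ 2 = lam ∧ ∀ x : Fin n → ℝ, x ≠ xstar → eta A b x ^ 2 > lam := by
  classical
  set M : Matrix (Fin (n+1)) (Fin (n+1)) ℝ := Cᵀ * C with hM
  have hherm : M.IsHermitian := by
    have := Matrix.isHermitian_conjTranspose_mul_self C
    rwa [Matrix.conjTranspose_eq_transpose_of_trivial] at this
  -- the lifted vector
  set z : (Fin n → ℝ) → (Fin (n+1) → ℝ) := fun x => Fin.snoc x (-1) with hzdef
  have hCz : ∀ x, C *ᵥ (z x) = A.mulVec x - b := by
    intro x
    ext i
    simp only [Matrix.mulVec, dotProduct, hC, Matrix.of_apply, hzdef]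
    rw [Fin.sum_univ_castSucc]
    simp [Fin.snoc_castSucc, Fin.snoc_last, Matrix.mulVec, dotProduct]
    ring
  have hzz : ∀ x, (z x) ⬝ᵥ (z x) = 1 + x ⬝ᵥ x := by
    intro x
    simp only [dotProduct, hzdef]
    rw [Fin.sum_univ_castSucc]
    simp [Fin.snoc_castSucc, Fin.snoc_last, dotProduct]
    ring
  have hquad : ∀ x, (z x) ⬝ᵥ (M *ᵥ (z x)) = (A.mulVec x - b) ⬝ᵥ (A.mulVec x - b) := by
    intro x
    rw [hM, ← Matrix.mulVec_mulVec, Matrix.dotProduct_mulVec, Matrix.vecMul_transpose, hCz]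
  have heta : ∀ x, eta A b x ^ 2 = ((z x) ⬝ᵥ (M *ᵥ (z x))) / ((z x) ⬝ᵥ (z x)) := by
    intro x
    rw [aux_eta_sq, hquad, hzz]
  have hzzpos : ∀ x, (0:ℝ) < (z x) ⬝ᵥ (z x) := by
    intro x
    rw [hzz]
    linarith [aux_dot_nonneg x]
  -- z xstar is an eigenvector
  have hzstar : z xstar = (-(1 / v (Fin.last n))) • v := by
    funext j
    refine Fin.lastCases ?_ ?_ j
    · simp only [hzdef, Fin.snoc_last, Pi.smul_apply, smul_eq_mul]
      field_simp
    · intro i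
      simp only [hzdef, Fin.snoc_castSucc, Pi.smul_apply, smul_eq_mul, hxstar]
  have hMzstar : M *ᵥ (z xstar) = lam • (z xstar) := by
    rw [hzstar, Matrix.mulVec_smul, hv, smul_comm]
  constructor
  · rw [heta, hMzstar, dotProduct_smul, smul_eq_mul,
      mul_div_assoc, div_self (hzzpos xstar).ne']
    ring
  · intro x hx
    have hray := aux_rayleigh M hherm lam hmin (z x)
    have hne : M *ᵥ (z x) ≠ lam • (z x) := by
      intro heqv
      -- then z x is in the eigenspace, which is spanned by v
      set E := Module.End.eigenspace (Matrix.toLin' M) lam with hE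
      have hvE : v ∈ E := by
        rw [Module.End.mem_eigenspace_iff, Matrix.toLin'_apply]
        exact hv
      have hzE : z x ∈ E := by
        rw [Module.End.mem_eigenspace_iff, Matrix.toLin'_apply]
        exact heqv
      have hvne : v ≠ 0 := by
        intro h0
        rw [h0] at hvnorm
        simp [vnorm] at hvnorm
      have hvne' : (⟨v, hvE⟩ : E) ≠ 0 := by
        intro h0
        exact hvne (congrArg Subtype.val h0)
      obtain ⟨t, ht⟩ := (finrank_eq_one_iff_of_nonzero' (⟨v, hvE⟩ : E) hvne').mp hsimple ⟨z x, hzE⟩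
      have htv : t • v = z x := congrArg Subtype.val ht
      have hlast : t * v (Fin.last n) = -1 := by
        have := congrFun htv (Fin.last n)
        simpa [hzdef, Fin.snoc_last] using this
      have htval : t = -(1 / v (Fin.last n)) := by
        field_simp
        linarith [hlast]
      apply hx
      funext i
      have := congrFun htv i.castSucc
      simp only [hzdef, Fin.snoc_castSucc, Pi.smul_apply, smul_eq_mul] at this
      rw [hxstar]
      simp only
      rw [← this, htval]
    have hlt : lam * ((z x) ⬝ᵥ (z x)) < (z x) ⬝ᵥ (M *ᵥ (z x)) :=
      lt_of_le_of_ne hray.1 (fun h => hne (hray.2 h.symm))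
    rw [heta, gt_iff_lt, lt_div_iff₀ (hzzpos x)]
    linarith
end

section
/- Let C be a real p×q matrix with full column rank, and suppose the smallest eigenvalue σ_q² of the symmetric positive definite matrix CᵀC is simple and strictly smaller than all other eigenvalues, the second smallest being σ_{q−1}² (so 0 < σ_q < σ_{q−1}). Let v_q be a unit eigenvector of CᵀC for σ_q² and set u_q = (1/σ_q) C v_q. Let s₀ ∈ ℝ^q be a unit vector, define s_{k+1} = (CᵀC)^{−1} s_k / ‖(CᵀC)^{−1} s_k‖₂ and f_k = C s_k, and suppose u_qᵀ f₀ > 0. Then there exist constants c₁, c₂ > 0 such that for all k ≥ 0, ‖f_k − σ_q u_q‖₂ ≤ c₁ (σ_q/σ_{q−1})^{2k} and |‖f_k‖₂ − σ_q| ≤ c₂ (σ_q/σ_{q−1})^{4k}. -/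
open Matrix BigOperators

namespace PM

noncomputable def toE {k : ℕ} (v : Fin k → ℝ) : EuclideanSpace ℝ (Fin k) :=
  (WithLp.equiv 2 (Fin k → ℝ)).symm v

lemma vnorm_eq {k : ℕ} (v : Fin k → ℝ) : vnorm v = ‖toE v‖ := by
  rw [EuclideanSpace.norm_eq]
  simp [vnorm, toE, sq_abs]

lemma dot_eq {k : ℕ} (v w : Fin k → ℝ) : v ⬝ᵥ w = (inner ℝ (toE v) (toE w) : ℝ) := by
  simp [toE, PiLp.inner_apply, dotProduct, RCLike.inner_apply, mul_comm]

lemma toE_add {k : ℕ} (v w : Fin k → ℝ) : toE (v + w) = toE v + toE w := rfl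
lemma toE_smul {k : ℕ} (c : ℝ) (v : Fin k → ℝ) : toE (c • v) = c • toE v := rfl

lemma vnorm_nonneg {k : ℕ} (v : Fin k → ℝ) : 0 ≤ vnorm v := by
  rw [vnorm_eq]; exact norm_nonneg _

lemma vnorm_smul {k : ℕ} (c : ℝ) (v : Fin k → ℝ) : vnorm (c • v) = |c| * vnorm v := by
  rw [vnorm_eq, toE_smul, norm_smul, vnorm_eq]; simp

lemma vnorm_triangle {k : ℕ} (v w : Fin k → ℝ) : vnorm (v + w) ≤ vnorm v + vnorm w := by
  rw [vnorm_eq, vnorm_eq, vnorm_eq, toE_add]; exact norm_add_le _ _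

lemma vnorm_sub_le {k : ℕ} (v w : Fin k → ℝ) : vnorm (v - w) ≤ vnorm v + vnorm w := by
  have h : v - w = v + (-1 : ℝ) • w := by module
  rw [h]
  calc vnorm (v + (-1 : ℝ) • w) ≤ vnorm v + vnorm ((-1 : ℝ) • w) := vnorm_triangle _ _
    _ = vnorm v + vnorm w := by rw [vnorm_smul]; norm_num

lemma vnorm_sq {k : ℕ} (v : Fin k → ℝ) : vnorm v ^ 2 = v ⬝ᵥ v := by
  rw [vnorm_eq, dot_eq, ← real_inner_self_eq_norm_sq]

lemma dot_le {k : ℕ} (v w : Fin k → ℝ) : v ⬝ᵥ w ≤ vnorm v * vnorm w := by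
  rw [dot_eq, vnorm_eq, vnorm_eq]; exact real_inner_le_norm _ _

lemma abs_dot_le {k : ℕ} (v w : Fin k → ℝ) : |v ⬝ᵥ w| ≤ vnorm v * vnorm w := by
  rw [dot_eq, vnorm_eq, vnorm_eq]; exact abs_real_inner_le_norm _ _

lemma herm_dot {q : ℕ} (A : Matrix (Fin q) (Fin q) ℝ) (hA : Aᵀ = A) (x y : Fin q → ℝ) :
    x ⬝ᵥ A.mulVec y = A.mulVec x ⬝ᵥ y := by
  rw [Matrix.dotProduct_mulVec]
  conv_lhs => rw [← hA]
  rw [Matrix.vecMul_transpose]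

lemma CtC_dot {p q : ℕ} (C : Matrix (Fin p) (Fin q) ℝ) (x y : Fin q → ℝ) :
    C.mulVec x ⬝ᵥ C.mulVec y = x ⬝ᵥ (Cᵀ * C).mulVec y := by
  symm
  rw [← Matrix.mulVec_mulVec, Matrix.dotProduct_mulVec, Matrix.vecMul_transpose]

lemma vnorm_mulVec_le {p q : ℕ} (M : Matrix (Fin p) (Fin q) ℝ) (x : Fin q → ℝ) :
    vnorm (M.mulVec x) ≤ Real.sqrt (∑ i, ∑ j, (M i j)^2) * vnorm x := by
  have h1 : ∀ i, (M.mulVec x i)^2 ≤ (∑ j, M i j ^2) * (∑ j, x j ^2) := by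
    intro i
    have := Finset.sum_mul_sq_le_sq_mul_sq Finset.univ (fun j => M i j) x
    simpa [Matrix.mulVec, dotProduct] using this
  rw [vnorm, vnorm, ← Real.sqrt_mul (by positivity)]
  apply Real.sqrt_le_sqrt
  calc ∑ i, (M.mulVec x i)^2 ≤ ∑ i, (∑ j, M i j^2) * (∑ j, x j^2) :=
        Finset.sum_le_sum (fun i _ => h1 i)
    _ = (∑ i, ∑ j, M i j ^2) * ∑ j, x j ^2 := by rw [Finset.sum_mul]

lemma expand_dot {q : ℕ} (b : OrthonormalBasis (Fin q) ℝ (EuclideanSpace ℝ (Fin q)))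
    (cx cy : Fin q → ℝ) :
    (inner ℝ (∑ i, cx i • b i) (∑ j, cy j • b j) : ℝ) = ∑ i, cx i * cy i := by
  have hb := b.orthonormal
  rw [orthonormal_iff_ite] at hb
  rw [sum_inner]
  apply Finset.sum_congr rfl
  intro i _
  rw [inner_sum, Finset.sum_eq_single i]
  · rw [real_inner_smul_left, real_inner_smul_right, hb i i]; simp
  · intro j _ hj
    rw [real_inner_smul_left, real_inner_smul_right, hb i j, if_neg (Ne.symm hj)]; ring
  · intro h; exact absurd (Finset.mem_univ i) h

lemma rayleigh {q : ℕ} (A : Matrix (Fin q) (Fin q) ℝ) (hA : A.IsHermitian)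
    (lam mu : ℝ) (v : Fin q → ℝ) (hv : A.mulVec v = lam • v) (hv1 : v ⬝ᵥ v = 1)
    (hsimple : Module.finrank ℝ (Module.End.eigenspace (Matrix.toLin' A) lam) = 1)
    (hrest : ∀ μ : ℝ, Module.End.HasEigenvalue (Matrix.toLin' A) μ → μ ≠ lam → mu ≤ μ)
    (w : Fin q → ℝ) (hw : v ⬝ᵥ w = 0) :
    mu * (w ⬝ᵥ w) ≤ w ⬝ᵥ A.mulVec w := by
  set b := hA.eigenvectorBasis with hbdef
  set ev := hA.eigenvalues with hevdef
  set c : Fin q → ℝ := fun i => (b i : Fin q → ℝ) ⬝ᵥ w with hc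
  have hexpE : toE w = ∑ i, c i • b i := by
    have h0 := b.sum_repr' (toE w)
    rw [← h0]
    apply Finset.sum_congr rfl
    intro i _
    show _ = ((b i : Fin q → ℝ) ⬝ᵥ w) • b i
    rw [dot_eq]
    rfl
  have hexp : w = ∑ i, c i • (b i : Fin q → ℝ) := by
    have h := congrArg WithLp.ofLp hexpE; simpa [toE] using h
  have heig : ∀ i, Module.End.HasEigenvalue (Matrix.toLin' A) (ev i) := by
    intro i
    apply Module.End.hasEigenvalue_of_hasEigenvector (x := (b i : Fin q → ℝ))
    constructor
    · rw [Module.End.mem_eigenspace_iff]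
      exact hA.mulVec_eigenvectorBasis i
    · intro h
      exact b.orthonormal.ne_zero i (by ext j; exact congrFun h j)
  have hvne : v ≠ 0 := by
    intro h; rw [h] at hv1; simp [dotProduct] at hv1
  have hspan : (Submodule.span ℝ {v} : Submodule ℝ (Fin q → ℝ)) =
      Module.End.eigenspace (Matrix.toLin' A) lam := by
    apply Submodule.eq_of_le_of_finrank_le
    · rw [Submodule.span_le, Set.singleton_subset_iff]
      rw [SetLike.mem_coe, Module.End.mem_eigenspace_iff, Matrix.toLin'_apply, hv]
    · rw [hsimple, finrank_span_singleton hvne]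
  have hzero : ∀ i, ev i = lam → c i = 0 := by
    intro i hi
    have hmem : (b i : Fin q → ℝ) ∈ Submodule.span ℝ {v} := by
      rw [hspan, Module.End.mem_eigenspace_iff, ← hi]
      exact hA.mulVec_eigenvectorBasis i
    obtain ⟨a, ha⟩ := Submodule.mem_span_singleton.mp hmem
    show (b i : Fin q → ℝ) ⬝ᵥ w = 0
    rw [← ha, smul_dotProduct, hw, smul_eq_mul, mul_zero]
  have hww : w ⬝ᵥ w = ∑ i, c i * c i := by
    rw [dot_eq, hexpE, expand_dot]
  have hAwE : toE (A.mulVec w) = ∑ i, (ev i * c i) • b i := by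
    have : A.mulVec w = ∑ i, (ev i * c i) • (b i : Fin q → ℝ) := by
      conv_lhs => rw [hexp]
      rw [← Matrix.mulVecLin_apply, map_sum]
      apply Finset.sum_congr rfl
      intro i _
      have h1 : A.mulVecLin (c i • (b i : Fin q → ℝ)) = c i • (ev i • (b i : Fin q → ℝ)) := by
        rw [_root_.map_smul]
        exact congrArg _ (hA.mulVec_eigenvectorBasis i)
      rw [h1, smul_smul, mul_comm]
    rw [this]; ext j; simp [toE]
  have hwAw : w ⬝ᵥ A.mulVec w = ∑ i, c i * (ev i * c i) := by
    rw [dot_eq, hexpE, hAwE, expand_dot]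
  rw [hww, hwAw, Finset.mul_sum]
  apply Finset.sum_le_sum
  intro i _
  by_cases hi : ev i = lam
  · rw [hzero i hi]; ring_nf; exact le_refl _
  · have h1 := hrest (ev i) (heig i) hi
    have h2 : 0 ≤ c i * c i := mul_self_nonneg _
    calc mu * (c i * c i) ≤ ev i * (c i * c i) := mul_le_mul_of_nonneg_right h1 h2
      _ = c i * (ev i * c i) := by ring

lemma decomp1 {k : ℕ} (N a : ℝ) (v u : Fin k → ℝ) :
    N⁻¹ • (a • v + u) - v = (N⁻¹ * a - 1) • v + N⁻¹ • u := by module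

end PM

open PM in
set_option maxHeartbeats 2000000 in
theorem stmt_17 {p q : ℕ} (C : Matrix (Fin p) (Fin q) ℝ)
    (hC : IsUnit (Cᵀ * C).det)
    (σq σq1 : ℝ) (h0 : 0 < σq) (hlt : σq < σq1)
    (vq : Fin q → ℝ) (hvq : (Cᵀ * C).mulVec vq = σq ^ 2 • vq) (hvqn : vnorm vq = 1)
    (hsimple :
      Module.finrank ℝ (Module.End.eigenspace (Matrix.toLin' (Cᵀ * C)) (σq ^ 2)) = 1)
    (hrest : ∀ μ : ℝ, Module.End.HasEigenvalue (Matrix.toLin' (Cᵀ * C)) μ →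
      μ ≠ σq ^ 2 → σq1 ^ 2 ≤ μ)
    (uq : Fin p → ℝ) (huq : uq = (1 / σq) • C.mulVec vq)
    (s : ℕ → Fin q → ℝ) (hs0 : vnorm (s 0) = 1)
    (hrec : ∀ k : ℕ, s (k + 1) =
      (1 / vnorm ((Cᵀ * C)⁻¹.mulVec (s k))) • (Cᵀ * C)⁻¹.mulVec (s k))
    (hpos : uq ⬝ᵥ C.mulVec (s 0) > 0) :
    ∃ c1 > 0, ∃ c2 > 0, ∀ k : ℕ,
      vnorm (C.mulVec (s k) - σq • uq) ≤ c1 * (σq / σq1) ^ (2 * k) ∧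
      |vnorm (C.mulVec (s k)) - σq| ≤ c2 * (σq / σq1) ^ (4 * k) := by
  classical
  set A := Cᵀ * C with hA_def
  set lam := σq ^ 2 with hlam_def
  set mu := σq1 ^ 2 with hmu_def
  have hσq1 : 0 < σq1 := h0.trans hlt
  have hlam0 : 0 < lam := by rw [hlam_def]; positivity
  have hmu0 : 0 < mu := by rw [hmu_def]; positivity
  have hlm : lam < mu := by
    rw [hlam_def, hmu_def]
    exact pow_lt_pow_left₀ hlt h0.le two_ne_zero
  have hAT : Aᵀ = A := by rw [hA_def, Matrix.transpose_mul, Matrix.transpose_transpose]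
  have hAH : A.IsHermitian := by
    show Aᴴ = A
    have hConj : Aᴴ = Aᵀ := by ext i j; simp [Matrix.conjTranspose_apply]
    rw [hConj, hAT]
  set B := A⁻¹ with hB_def
  have hBA : ∀ x, A.mulVec (B.mulVec x) = x := by
    intro x
    rw [hB_def, Matrix.mulVec_mulVec, Matrix.mul_nonsing_inv _ hC, Matrix.one_mulVec]
  have hAB : ∀ x, B.mulVec (A.mulVec x) = x := by
    intro x
    rw [hB_def, Matrix.mulVec_mulVec, Matrix.nonsing_inv_mul _ hC, Matrix.one_mulVec]
  have hBT : Bᵀ = B := by rw [hB_def, Matrix.transpose_nonsing_inv, hAT]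
  have hAdot := herm_dot A hAT
  have hBdot := herm_dot B hBT
  have hvqdot : vq ⬝ᵥ vq = 1 := by
    have h := vnorm_sq vq
    rw [hvqn] at h
    linarith [h]
  have hBv : B.mulVec vq = lam⁻¹ • vq := by
    have h1 : B.mulVec (A.mulVec vq) = vq := hAB vq
    rw [hvq, Matrix.mulVec_smul] at h1
    calc B.mulVec vq = lam⁻¹ • (lam • B.mulVec vq) := by
          rw [smul_smul, inv_mul_cancel₀ hlam0.ne', one_smul]
      _ = lam⁻¹ • vq := by rw [h1]
  have hBorth : ∀ w, vq ⬝ᵥ w = 0 → vq ⬝ᵥ B.mulVec w = 0 := by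
    intro w hw
    rw [hBdot vq w, hBv, smul_dotProduct, hw, smul_eq_mul, mul_zero]
  have hBnorm : ∀ w, vq ⬝ᵥ w = 0 → vnorm (B.mulVec w) ≤ mu⁻¹ * vnorm w := by
    intro w hw
    have hu_orth : vq ⬝ᵥ B.mulVec w = 0 := hBorth w hw
    have hray := rayleigh A hAH lam mu vq hvq hvqdot hsimple hrest (B.mulVec w) hu_orth
    rw [hBA w] at hray
    have h2 : B.mulVec w ⬝ᵥ w ≤ vnorm (B.mulVec w) * vnorm w := dot_le _ _
    have h3 : B.mulVec w ⬝ᵥ B.mulVec w = vnorm (B.mulVec w) ^ 2 := (vnorm_sq _).symm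
    rcases eq_or_lt_of_le (vnorm_nonneg (B.mulVec w)) with h4 | h4
    · rw [← h4]
      exact mul_nonneg (by positivity) (vnorm_nonneg w)
    · rw [h3] at hray
      have h6 : (mu * vnorm (B.mulVec w)) * vnorm (B.mulVec w)
          ≤ vnorm w * vnorm (B.mulVec w) := by
        calc (mu * vnorm (B.mulVec w)) * vnorm (B.mulVec w)
            = mu * vnorm (B.mulVec w) ^ 2 := by ring
          _ ≤ B.mulVec w ⬝ᵥ w := hray
          _ ≤ vnorm (B.mulVec w) * vnorm w := h2
          _ = vnorm w * vnorm (B.mulVec w) := by ring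
      have h5 : mu * vnorm (B.mulVec w) ≤ vnorm w := le_of_mul_le_mul_right h6 h4
      rw [inv_mul_eq_div, le_div_iff₀ hmu0]
      linarith
  -- alpha
  have halpha : 0 < vq ⬝ᵥ s 0 := by
    rw [huq, smul_dotProduct, CtC_dot C vq (s 0), ← hA_def, hAdot vq (s 0), hvq,
      smul_dotProduct] at hpos
    simp only [smul_eq_mul] at hpos
    by_contra h
    push_neg at h
    have e0 : (0:ℝ) < 1 / σq := by positivity
    nlinarith [mul_nonneg (mul_nonneg e0.le hlam0.le) (neg_nonneg.mpr h)]
  set α := vq ⬝ᵥ s 0 with hα_def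
  set w0 := s 0 - α • vq with hw0_def
  have hw0 : vq ⬝ᵥ w0 = 0 := by
    rw [hw0_def, dotProduct_sub, dotProduct_smul, hvqdot, smul_eq_mul, mul_one, sub_self]
  set W := vnorm w0 with hW_def
  have hW0 : 0 ≤ W := vnorm_nonneg w0
  -- sequences
  set t : ℕ → Fin q → ℝ := fun k => (fun x => B.mulVec x)^[k] (s 0) with ht_def
  set ws : ℕ → Fin q → ℝ := fun k => (fun x => B.mulVec x)^[k] w0 with hws_def
  have ht0 : t 0 = s 0 := rfl
  have hws0 : ws 0 = w0 := rfl
  have ht_succ : ∀ k, t (k + 1) = B.mulVec (t k) := by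
    intro k; rw [ht_def]; simp [Function.iterate_succ_apply']
  have hws_succ : ∀ k, ws (k + 1) = B.mulVec (ws k) := by
    intro k; rw [hws_def]; simp [Function.iterate_succ_apply']
  have hws_orth : ∀ k, vq ⬝ᵥ ws k = 0 := by
    intro k
    induction k with
    | zero => rw [hws0]; exact hw0
    | succ k ih => rw [hws_succ k]; exact hBorth _ ih
  have hws_norm : ∀ k, vnorm (ws k) ≤ (mu⁻¹) ^ k * W := by
    intro k
    induction k with
    | zero => rw [hws0]; simp [hW_def]
    | succ k ih =>
      rw [hws_succ k]
      calc vnorm (B.mulVec (ws k)) ≤ mu⁻¹ * vnorm (ws k) := hBnorm _ (hws_orth k)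
        _ ≤ mu⁻¹ * ((mu⁻¹) ^ k * W) := by
            apply mul_le_mul_of_nonneg_left ih
            positivity
        _ = (mu⁻¹) ^ (k + 1) * W := by ring
  have ht_eq : ∀ k, t k = (α * (lam⁻¹) ^ k) • vq + ws k := by
    intro k
    induction k with
    | zero => rw [ht0, hws0, hw0_def]; simp
    | succ k ih =>
      rw [ht_succ k, ih, Matrix.mulVec_add, Matrix.mulVec_smul, hBv, ← hws_succ k,
        smul_smul, pow_succ]
      congr 2
      ring
  have ha_pos : ∀ k : ℕ, 0 < α * (lam⁻¹) ^ k := by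
    intro k; positivity
  have htpos : ∀ k, α * (lam⁻¹) ^ k ≤ vnorm (t k) := by
    intro k
    have h1 : vq ⬝ᵥ t k = α * (lam⁻¹) ^ k := by
      rw [ht_eq k, dotProduct_add, dotProduct_smul, hvqdot, hws_orth k, smul_eq_mul,
        mul_one, add_zero]
    calc α * (lam⁻¹) ^ k = vq ⬝ᵥ t k := h1.symm
      _ ≤ vnorm vq * vnorm (t k) := dot_le _ _
      _ = vnorm (t k) := by rw [hvqn, one_mul]
  have htN : ∀ k, 0 < vnorm (t k) := fun k => lt_of_lt_of_le (ha_pos k) (htpos k)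
  have hst : ∀ k, s k = (vnorm (t k))⁻¹ • t k := by
    intro k
    induction k with
    | zero => rw [ht0, hs0, inv_one, one_smul]
    | succ k ih =>
      rw [hrec k]
      have h1 : B.mulVec (s k) = (vnorm (t k))⁻¹ • t (k + 1) := by
        rw [ih, Matrix.mulVec_smul, ht_succ k]
      rw [h1, vnorm_smul, abs_of_pos (inv_pos.mpr (htN k)), smul_smul]
      congr 1
      have h2 := (htN k).ne'
      have h3 := (htN (k + 1)).ne'
      field_simp
      try ring
  -- bound |N - a| ≤ δ
  have hNa : ∀ k, |vnorm (t k) - α * (lam⁻¹) ^ k| ≤ vnorm (ws k) := by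
    intro k
    set a := α * (lam⁻¹) ^ k
    have hsm : vnorm (a • vq) = a := by
      rw [vnorm_smul, hvqn, mul_one, abs_of_pos (ha_pos k)]
    rw [abs_le]
    constructor
    · have h1 : vnorm (a • vq) ≤ vnorm (t k) + vnorm (ws k) := by
        have : a • vq = t k - ws k := by rw [ht_eq k]; module
        rw [this]
        exact vnorm_sub_le _ _
      rw [hsm] at h1
      linarith
    · have h2 : vnorm (t k) ≤ vnorm (a • vq) + vnorm (ws k) := by
        rw [ht_eq k]; exact vnorm_triangle _ _
      rw [hsm] at h2
      linarith
  -- geometric ratio facts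
  have hrk : ∀ m : ℕ, (σq / σq1) ^ (2 * m) = (lam / mu) ^ m := by
    intro m
    rw [pow_mul, div_pow, ← hlam_def, ← hmu_def]
  have hr0 : 0 < lam / mu := div_pos hlam0 hmu0
  -- main per-k estimates on s k - vq
  have hkey : ∀ k, vnorm (s k - vq) ≤ (2 * W / α) * (lam / mu) ^ k := by
    intro k
    set a := α * (lam⁻¹) ^ k with ha_def
    set N := vnorm (t k) with hN_def
    set δ := vnorm (ws k) with hδ_def
    have haN : a ≤ N := htpos k
    have ha0 : 0 < a := ha_pos k
    have hN0 : 0 < N := htN k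
    have hδ0 : 0 ≤ δ := vnorm_nonneg _
    have hdec : s k - vq = (N⁻¹ * a - 1) • vq + N⁻¹ • ws k := by
      have h := decomp1 N a vq (ws k)
      rw [← ht_eq k] at h
      rw [hst k]
      exact h
    have h1 : vnorm (s k - vq) ≤ |N⁻¹ * a - 1| + N⁻¹ * δ := by
      rw [hdec]
      calc vnorm ((N⁻¹ * a - 1) • vq + N⁻¹ • ws k)
          ≤ vnorm ((N⁻¹ * a - 1) • vq) + vnorm (N⁻¹ • ws k) := vnorm_triangle _ _
        _ = |N⁻¹ * a - 1| + N⁻¹ * δ := by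
            rw [vnorm_smul, vnorm_smul, hvqn, mul_one, abs_of_pos (inv_pos.mpr hN0)]
    have h2 : |N⁻¹ * a - 1| ≤ δ / N := by
      have : N⁻¹ * a - 1 = -((N - a) / N) := by field_simp; ring
      rw [this, abs_neg, abs_div, abs_of_pos hN0]
      gcongr
      exact hNa k
    have h3 : δ / N ≤ δ / a := div_le_div_of_nonneg_left hδ0 ha0 haN
    have h4 : N⁻¹ * δ ≤ δ / a := by
      rw [inv_mul_eq_div, div_le_div_iff₀ hN0 ha0]
      exact mul_le_mul_of_nonneg_left haN hδ0
    have h5 : δ / a ≤ ((mu⁻¹) ^ k * W) / a := by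
      gcongr
      exact hws_norm k
    have hlk : (lam : ℝ) ^ k ≠ 0 := pow_ne_zero _ hlam0.ne'
    have hmk : (mu : ℝ) ^ k ≠ 0 := pow_ne_zero _ hmu0.ne'
    have heq : 2 * (((mu⁻¹) ^ k * W) / a) = (2 * W / α) * (lam / mu) ^ k := by
      rw [ha_def, div_pow, inv_pow, inv_pow]
      field_simp
    calc vnorm (s k - vq) ≤ |N⁻¹ * a - 1| + N⁻¹ * δ := h1
      _ ≤ δ / N + δ / a := add_le_add h2 h4
      _ ≤ δ / a + δ / a := by linarith
      _ = 2 * (δ / a) := by ring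
      _ ≤ 2 * (((mu⁻¹) ^ k * W) / a) := by linarith
      _ = (2 * W / α) * (lam / mu) ^ k := heq
  -- matrix norm constants
  set MC := Real.sqrt (∑ i, ∑ j, (C i j) ^ 2) with hMC_def
  set MA := Real.sqrt (∑ i, ∑ j, (A i j) ^ 2) with hMA_def
  have hMC0 : 0 ≤ MC := Real.sqrt_nonneg _
  have hMA0 : 0 ≤ MA := Real.sqrt_nonneg _
  have hCv : σq • uq = C.mulVec vq := by
    rw [huq, smul_smul, mul_one_div, div_self h0.ne', one_smul]
  -- first bound
  have hfb : ∀ k, vnorm (C.mulVec (s k) - σq • uq) ≤ (MC * (2 * W / α)) * (lam / mu) ^ k := by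
    intro k
    have hd : C.mulVec (s k) - σq • uq = C.mulVec (s k - vq) := by
      rw [hCv, Matrix.mulVec_sub]
    rw [hd]
    calc vnorm (C.mulVec (s k - vq)) ≤ MC * vnorm (s k - vq) := vnorm_mulVec_le C _
      _ ≤ MC * ((2 * W / α) * (lam / mu) ^ k) :=
          mul_le_mul_of_nonneg_left (hkey k) hMC0
      _ = (MC * (2 * W / α)) * (lam / mu) ^ k := by ring
  -- second bound
  have hsb : ∀ k, |vnorm (C.mulVec (s k)) - σq| ≤
      (MA * (W / α) ^ 2 / σq) * ((lam / mu) ^ k) ^ 2 := by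
    intro k
    set y := vnorm (C.mulVec (s k)) with hy_def
    set a := α * (lam⁻¹) ^ k with ha_def
    set N := vnorm (t k) with hN_def
    set δ := vnorm (ws k) with hδ_def
    set u := ws k with hu_def
    set E := u ⬝ᵥ A.mulVec u with hE_def
    have haN : a ≤ N := htpos k
    have ha0 : 0 < a := ha_pos k
    have hN0 : 0 < N := htN k
    have hδ0 : 0 ≤ δ := vnorm_nonneg _
    have hy0 : 0 ≤ y := vnorm_nonneg _
    have hvqu : vq ⬝ᵥ u = 0 := hws_orth k
    have huvq : u ⬝ᵥ vq = 0 := by rw [dotProduct_comm]; exact hvqu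
    have hAvq_u : vq ⬝ᵥ A.mulVec u = 0 := by
      rw [hAdot, hvq, smul_dotProduct, hvqu, smul_eq_mul, mul_zero]
    have htAt : t k ⬝ᵥ A.mulVec (t k) = a ^ 2 * lam + E := by
      rw [ht_eq k]
      simp only [Matrix.mulVec_add, Matrix.mulVec_smul, hvq, add_dotProduct,
        dotProduct_add, smul_dotProduct, dotProduct_smul, smul_eq_mul, hvqdot,
        hvqu, huvq, hAvq_u, ← hu_def, ← hE_def]
      ring
    have hN2 : N ^ 2 = a ^ 2 + δ ^ 2 := by
      rw [hN_def, vnorm_sq, ht_eq k, hδ_def, vnorm_sq]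
      simp only [add_dotProduct, dotProduct_add, smul_dotProduct, dotProduct_smul,
        smul_eq_mul, hvqdot, hvqu, huvq, ← hu_def]
      ring
    have hy2 : y ^ 2 * N ^ 2 = a ^ 2 * lam + E := by
      have h1 : y ^ 2 = s k ⬝ᵥ A.mulVec (s k) := by
        rw [hy_def, vnorm_sq, CtC_dot, ← hA_def]
      have h2 : y ^ 2 = N⁻¹ * (N⁻¹ * (a ^ 2 * lam + E)) := by
        rw [h1, hst k, smul_dotProduct, Matrix.mulVec_smul, dotProduct_smul,
          smul_eq_mul, smul_eq_mul, ← hN_def, htAt]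
      rw [h2]
      have hN' : N ≠ 0 := hN0.ne'
      field_simp
      try ring
      try exact Or.inl trivial
    have hE_low : mu * δ ^ 2 ≤ E := by
      have hray := rayleigh A hAH lam mu vq hvq hvqdot hsimple hrest u hvqu
      rw [hδ_def, vnorm_sq]
      exact hray
    have hE_up : E ≤ MA * δ ^ 2 := by
      calc E ≤ vnorm u * vnorm (A.mulVec u) := dot_le _ _
        _ ≤ vnorm u * (MA * vnorm u) :=
            mul_le_mul_of_nonneg_left (vnorm_mulVec_le A u) (vnorm_nonneg u)
        _ = MA * δ ^ 2 := by rw [← hδ_def]; ring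
    have hylam : lam ≤ y ^ 2 := by
      have h9 : lam * N ^ 2 ≤ y ^ 2 * N ^ 2 := by
        calc lam * N ^ 2 = a ^ 2 * lam + lam * δ ^ 2 := by rw [hN2]; ring
          _ ≤ a ^ 2 * lam + mu * δ ^ 2 := by
              have := mul_le_mul_of_nonneg_right hlm.le (sq_nonneg δ)
              linarith
          _ ≤ a ^ 2 * lam + E := by linarith
          _ = y ^ 2 * N ^ 2 := hy2.symm
      exact le_of_mul_le_mul_right h9 (by positivity)
    have hyge : σq ≤ y := by
      by_contra hcon
      push_neg at hcon
      have h9 : y ^ 2 < σq ^ 2 := by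
        exact pow_lt_pow_left₀ hcon hy0 two_ne_zero
      rw [← hlam_def] at h9
      linarith
    have hup : (y ^ 2 - lam) * N ^ 2 = E - lam * δ ^ 2 := by
      linear_combination hy2 - lam * hN2
    have hstep : (y ^ 2 - lam) * a ^ 2 ≤ MA * δ ^ 2 := by
      have ha2N2 : a ^ 2 ≤ N ^ 2 := by
        apply sq_le_sq' ?_ haN
        linarith
      calc (y ^ 2 - lam) * a ^ 2 ≤ (y ^ 2 - lam) * N ^ 2 :=
            mul_le_mul_of_nonneg_left ha2N2 (by linarith)
        _ = E - lam * δ ^ 2 := hup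
        _ ≤ MA * δ ^ 2 := by
            have := mul_nonneg hlam0.le (sq_nonneg δ)
            linarith
    have hdel : δ ^ 2 ≤ ((mu⁻¹) ^ k * W) ^ 2 := by
      apply sq_le_sq' ?_ (hws_norm k)
      have : (0:ℝ) ≤ (mu⁻¹) ^ k * W := by positivity
      linarith
    have hstep2 : (y ^ 2 - lam) * a ^ 2 ≤ MA * ((mu⁻¹) ^ k * W) ^ 2 := by
      calc (y ^ 2 - lam) * a ^ 2 ≤ MA * δ ^ 2 := hstep
        _ ≤ MA * ((mu⁻¹) ^ k * W) ^ 2 := mul_le_mul_of_nonneg_left hdel hMA0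
    have hlk : (lam : ℝ) ^ k ≠ 0 := pow_ne_zero _ hlam0.ne'
    have hmk : (mu : ℝ) ^ k ≠ 0 := pow_ne_zero _ hmu0.ne'
    have hfin : y ^ 2 - lam ≤ (MA * (W / α) ^ 2) * ((lam / mu) ^ k) ^ 2 := by
      have h6 : y ^ 2 - lam ≤ (MA * ((mu⁻¹) ^ k * W) ^ 2) / a ^ 2 := by
        rw [le_div_iff₀ (by positivity)]
        exact hstep2
      have h7 : (MA * ((mu⁻¹) ^ k * W) ^ 2) / a ^ 2
          = (MA * (W / α) ^ 2) * ((lam / mu) ^ k) ^ 2 := by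
        rw [ha_def, div_pow, div_pow, inv_pow, inv_pow]
        field_simp
        try ring
        try exact Or.inl trivial
      linarith [h7 ▸ h6]
    have habs : |y - σq| = y - σq := abs_of_nonneg (by linarith)
    rw [habs]

    have h8 : (y - σq) * σq ≤ y ^ 2 - lam := by
      rw [hlam_def]
      calc (y - σq) * σq ≤ (y - σq) * (y + σq) := by
            apply mul_le_mul_of_nonneg_left ?_ (by linarith)
            linarith
        _ = y ^ 2 - σq ^ 2 := by ring
    have h10 : y - σq ≤ (MA * (W / α) ^ 2 * ((lam / mu) ^ k) ^ 2) / σq := by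
      rw [le_div_iff₀ h0]
      calc (y - σq) * σq ≤ y ^ 2 - lam := h8
        _ ≤ MA * (W / α) ^ 2 * ((lam / mu) ^ k) ^ 2 := hfin
    calc y - σq ≤ (MA * (W / α) ^ 2 * ((lam / mu) ^ k) ^ 2) / σq := h10
      _ = MA * (W / α) ^ 2 / σq * ((lam / mu) ^ k) ^ 2 := by ring
  -- assemble
  refine ⟨MC * (2 * W / α) + 1, by positivity, MA * (W / α) ^ 2 / σq + 1, by positivity, ?_⟩
  intro k
  have hrpow : (0:ℝ) < (lam / mu) ^ k := pow_pos hr0 k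
  constructor
  · rw [hrk k]
    calc vnorm (C.mulVec (s k) - σq • uq) ≤ (MC * (2 * W / α)) * (lam / mu) ^ k := hfb k
      _ ≤ (MC * (2 * W / α) + 1) * (lam / mu) ^ k := by
          apply mul_le_mul_of_nonneg_right ?_ hrpow.le
          linarith
  · have h4k : (σq / σq1) ^ (4 * k) = ((lam / mu) ^ k) ^ 2 := by
      rw [show 4 * k = 2 * (2 * k) by ring, hrk (2 * k), show 2 * k = k * 2 by ring,
        pow_mul]
    rw [h4k]
    calc |vnorm (C.mulVec (s k)) - σq| ≤ (MA * (W / α) ^ 2 / σq) * ((lam / mu) ^ k) ^ 2 :=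
          hsb k
      _ ≤ (MA * (W / α) ^ 2 / σq + 1) * ((lam / mu) ^ k) ^ 2 := by
          apply mul_le_mul_of_nonneg_right ?_ (sq_nonneg _)
          linarith
end
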